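/- arXiv:2207.07156 — 5 statements merged into one kernel-verified Lean document; each statement's English description precedes it below -/
import Mathlib

section
/- For every natural number n ≥ 1, there exist subsets A_1, A_2, ..., A_n of {1, 2, ..., n} such that |A_q| = φ(q) for each q (where φ is Euler's totient function), and whenever lcm(q, q') ≤ n with q ≠ q', the sets A_q and A_{q'} are disjoint. -/
private lemma ceil_bounds (x q c : ℕ) (hq : 1 ≤ q) (hx : 1 ≤ x) (hc : c = (x + q - 1) / q) :
    x ≤ c * q ∧ c * q < x + q := by
  subst hc
  have h1 := Nat.div_add_mod (x + q - 1) q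
  have h2 := Nat.mod_lt (x + q - 1) (show 0 < q by omega)
  rw [Nat.mul_comm q] at h1
  generalize hcg : (x + q - 1) / q = c at h1 ⊢
  generalize hrg : (x + q - 1) % q = r at h1 h2
  generalize hy : c * q = y at h1 ⊢
  omega

private lemma card_coprime (q : ℕ) (hq : 1 ≤ q) :
    ((Finset.Icc 1 q).filter (fun a => Nat.Coprime q a)).card = Nat.totient q := by
  rcases eq_or_lt_of_le hq with h | h
  · subst h
    decide
  · rw [Nat.totient_eq_card_coprime]
    congr 1
    ext a
    simp only [Finset.mem_filter, Finset.mem_Icc, Finset.mem_range]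
    constructor
    · rintro ⟨⟨h1, h2⟩, hcop⟩
      refine ⟨?_, hcop⟩
      rcases eq_or_lt_of_le h2 with rfl | h3
      · have := hcop
        rw [Nat.Coprime, Nat.gcd_self] at this
        omega
      · exact h3
    · rintro ⟨h1, hcop⟩
      refine ⟨⟨?_, le_of_lt h1⟩, hcop⟩
      rcases Nat.eq_zero_or_pos a with rfl | h2
      · have := hcop
        rw [Nat.coprime_zero_right] at this
        omega
      · exact h2

theorem stmt_0 (n : ℕ) (hn : 1 ≤ n) :
    ∃ A : ℕ → Finset ℕ,
      (∀ q ∈ Finset.Icc 1 n, A q ⊆ Finset.Icc 1 n ∧ (A q).card = Nat.totient q) ∧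
      (∀ q ∈ Finset.Icc 1 n, ∀ q' ∈ Finset.Icc 1 n,
        q ≠ q' → Nat.lcm q q' ≤ n → Disjoint (A q) (A q')) := by
  refine ⟨fun q => ((Finset.Icc 1 q).filter (fun a => Nat.Coprime q a)).image
      (fun a => (n * a + q - 1) / q), ?_, ?_⟩
  · intro q hq
    rw [Finset.mem_Icc] at hq
    obtain ⟨hq1, hqn⟩ := hq
    constructor
    · intro c hc
      rw [Finset.mem_image] at hc
      obtain ⟨a, ha, hfc⟩ := hc
      rw [Finset.mem_filter, Finset.mem_Icc] at ha
      obtain ⟨⟨ha1, haq⟩, hcop⟩ := ha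
      have hx : 1 ≤ n * a := Nat.one_le_iff_ne_zero.mpr (by positivity)
      obtain ⟨hb1, hb2⟩ := ceil_bounds (n * a) q c hq1 hx hfc.symm
      rw [Finset.mem_Icc]
      constructor
      · rcases Nat.eq_zero_or_pos c with rfl | h
        · omega
        · exact h
      · have h1 : n * a ≤ n * q := Nat.mul_le_mul_left n haq
        have h2 : c * q < (n + 1) * q := by
          calc c * q < n * a + q := hb2
            _ ≤ n * q + q := by omega
            _ = (n + 1) * q := by ring
        exact Nat.lt_succ_iff.mp (Nat.lt_of_mul_lt_mul_right h2)
    · rw [Finset.card_image_of_injOn, card_coprime q hq1]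
      intro a ha a' ha' hfe
      rw [Finset.coe_filter, Set.mem_setOf_eq, Finset.mem_Icc] at ha ha'
      obtain ⟨⟨ha1, haq⟩, _⟩ := ha
      obtain ⟨⟨ha1', haq'⟩, _⟩ := ha'
      have hx : 1 ≤ n * a := Nat.one_le_iff_ne_zero.mpr (by positivity)
      have hx' : 1 ≤ n * a' := Nat.one_le_iff_ne_zero.mpr (by positivity)
      have hfe' : (n * a + q - 1) / q = (n * a' + q - 1) / q := hfe
      obtain ⟨hb1, hb2⟩ := ceil_bounds (n * a) q _ hq1 hx rfl
      obtain ⟨hb1', hb2'⟩ := ceil_bounds (n * a') q _ hq1 hx' rfl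
      rw [hfe'] at hb1 hb2
      have h1 : n * a < n * (a' + 1) := by
        calc n * a ≤ (n * a' + q - 1) / q * q := hb1
          _ < n * a' + q := hb2'
          _ ≤ n * a' + n := by omega
          _ = n * (a' + 1) := by ring
      have h2 : n * a' < n * (a + 1) := by
        calc n * a' ≤ (n * a' + q - 1) / q * q := hb1'
          _ < n * a + q := hb2
          _ ≤ n * a + n := by omega
          _ = n * (a + 1) := by ring
      have := Nat.lt_of_mul_lt_mul_left h1
      have := Nat.lt_of_mul_lt_mul_left h2
      omega
  · intro q hq q' hq' hne hlcm
    rw [Finset.mem_Icc] at hq hq'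
    obtain ⟨hq1, hqn⟩ := hq
    obtain ⟨hq1', hqn'⟩ := hq'
    rw [Finset.disjoint_left]
    intro c hc hc'
    rw [Finset.mem_image] at hc hc'
    obtain ⟨a, ha, hfc⟩ := hc
    obtain ⟨a', ha', hfc'⟩ := hc'
    rw [Finset.mem_filter, Finset.mem_Icc] at ha ha'
    obtain ⟨⟨ha1, haq⟩, hcop⟩ := ha
    obtain ⟨⟨ha1', haq'⟩, hcop'⟩ := ha'
    have hx : 1 ≤ n * a := Nat.one_le_iff_ne_zero.mpr (by positivity)
    have hx' : 1 ≤ n * a' := Nat.one_le_iff_ne_zero.mpr (by positivity)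
    obtain ⟨hb1, hb2⟩ := ceil_bounds (n * a) q c hq1 hx hfc.symm
    obtain ⟨hb1', hb2'⟩ := ceil_bounds (n * a') q' c hq1' hx' hfc'.symm
    set g := Nat.gcd q q' with hg
    set L := Nat.lcm q q' with hL
    have hgL : g * L = q * q' := Nat.gcd_mul_lcm q q'
    have hg1 : 0 < g := Nat.gcd_pos_of_pos_left q' (by omega)
    have key1 : n * (a * q') < n * (a' * q) + q * q' := by
      calc n * (a * q') = n * a * q' := by ring
        _ ≤ c * q * q' := Nat.mul_le_mul_right q' hb1
        _ = c * q' * q := by ring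
        _ < (n * a' + q') * q := (Nat.mul_lt_mul_right (show 0 < q by omega)).mpr hb2'
        _ = n * (a' * q) + q * q' := by ring
    have key2 : n * (a' * q) < n * (a * q') + q * q' := by
      calc n * (a' * q) = n * a' * q := by ring
        _ ≤ c * q' * q := Nat.mul_le_mul_right q hb1'
        _ = c * q * q' := by ring
        _ < (n * a + q) * q' := (Nat.mul_lt_mul_right (show 0 < q' by omega)).mpr hb2
        _ = n * (a * q') + q * q' := by ring
    have hdne : a * q' ≠ a' * q := by
      intro heq
      apply hne
      have hd1 : q ∣ a * q' := ⟨a', by rw [heq]; ring⟩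
      have hd2 : q' ∣ a' * q := ⟨a, by rw [← heq]; ring⟩
      have hdq : q ∣ q' := Nat.Coprime.dvd_of_dvd_mul_left hcop hd1
      have hdq' : q' ∣ q := Nat.Coprime.dvd_of_dvd_mul_left hcop' hd2
      exact Nat.dvd_antisymm hdq hdq'
    have hgd : g ∣ a * q' := Dvd.dvd.mul_left (Nat.gcd_dvd_right q q') a
    have hgd' : g ∣ a' * q := Dvd.dvd.mul_left (Nat.gcd_dvd_left q q') a'
    have hng : n * g < q * q' := by
      rcases Nat.lt_or_ge (a' * q) (a * q') with h | h
      · have hdvd : g ∣ a * q' - a' * q := Nat.dvd_sub hgd hgd'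
        have hge : g ≤ a * q' - a' * q := Nat.le_of_dvd (by omega) hdvd
        have hplus : a' * q + g ≤ a * q' := by omega
        have hmul : n * (a' * q) + n * g ≤ n * (a * q') := by
          calc n * (a' * q) + n * g = n * (a' * q + g) := by ring
            _ ≤ n * (a * q') := Nat.mul_le_mul_left n hplus
        omega
      · have h' : a * q' < a' * q := lt_of_le_of_ne h hdne
        have hdvd : g ∣ a' * q - a * q' := Nat.dvd_sub hgd' hgd
        have hge : g ≤ a' * q - a * q' := Nat.le_of_dvd (by omega) hdvd
        have hplus : a * q' + g ≤ a' * q := by omega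
        have hmul : n * (a * q') + n * g ≤ n * (a' * q) := by
          calc n * (a * q') + n * g = n * (a * q' + g) := by ring
            _ ≤ n * (a' * q) := Nat.mul_le_mul_left n hplus
        omega
    have hgn : g * n < g * L := by
      have h1 : g * n = n * g := by ring
      omega
    have : n < L := Nat.lt_of_mul_lt_mul_left hgn
    omega
end

section
/- Let n be a positive natural number, and let p/q and p'/q' be two distinct fractions in lowest terms in the interval (0,1] with q, q' ≤ n. If ⌈np/q⌉ = ⌈np'/q'⌉, then lcm(q, q') > n. -/
lemma ceil_lt_ceil_aux (n L a b : ℕ) (hL : 0 < L) (hLn : L ≤ n) (hab : a < b) :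
    ⌈(n : ℚ) * a / L⌉ < ⌈(n : ℚ) * b / L⌉ := by
  have hL0 : (0 : ℚ) < L := by exact_mod_cast hL
  have key : (n : ℚ) * a + L ≤ (n : ℚ) * b := by
    have h1 : (a : ℚ) + 1 ≤ b := by exact_mod_cast hab
    have h2 : (L : ℚ) ≤ n := by exact_mod_cast hLn
    nlinarith
  have h3 : (n : ℚ) * a / L + 1 ≤ (n : ℚ) * b / L := by
    rw [div_add' _ _ _ (ne_of_gt hL0), one_mul]
    gcongr
  have h4 := Int.ceil_lt_add_one ((n : ℚ) * a / L)
  have h5 := Int.le_ceil ((n : ℚ) * b / L)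
  have : ((⌈(n : ℚ) * a / L⌉ : ℚ)) < ((⌈(n : ℚ) * b / L⌉ : ℚ)) := by linarith
  exact_mod_cast this

theorem stmt_1 (n p q p' q' : ℕ) (hn : 1 ≤ n)
    (hq : 1 ≤ q) (hqn : q ≤ n) (hq' : 1 ≤ q') (hq'n : q' ≤ n)
    (hp : 1 ≤ p) (hpq : p ≤ q) (hp' : 1 ≤ p') (hp'q' : p' ≤ q')
    (hcop : Nat.Coprime p q) (hcop' : Nat.Coprime p' q')
    (hne : (p : ℚ) / q ≠ (p' : ℚ) / q')
    (hceil : ⌈(n : ℚ) * p / q⌉ = ⌈(n : ℚ) * p' / q'⌉) :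
    n < Nat.lcm q q' := by
  by_contra h
  push_neg at h
  set L := Nat.lcm q q' with hLdef
  have hqL : q ∣ L := Nat.dvd_lcm_left _ _
  have hq'L : q' ∣ L := Nat.dvd_lcm_right _ _
  have hL0 : 0 < L := Nat.pos_of_ne_zero (Nat.lcm_ne_zero (by omega) (by omega))
  set a := p * (L / q) with hadef
  set b := p' * (L / q') with hbdef
  have haq : a * q = p * L := by
    rw [hadef, mul_assoc, Nat.div_mul_cancel hqL]
  have hbq : b * q' = p' * L := by
    rw [hbdef, mul_assoc, Nat.div_mul_cancel hq'L]
  have hqQ : (q : ℚ) ≠ 0 := by positivity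
  have hq'Q : (q' : ℚ) ≠ 0 := by positivity
  have hLQ : (L : ℚ) ≠ 0 := by positivity
  have ha : (a : ℚ) / L = (p : ℚ) / q := by
    rw [div_eq_div_iff hLQ hqQ]; exact_mod_cast haq
  have hb : (b : ℚ) / L = (p' : ℚ) / q' := by
    rw [div_eq_div_iff hLQ hq'Q]; exact_mod_cast hbq
  have hab : a ≠ b := by
    intro he
    exact hne (by rw [← ha, ← hb, he])
  have ha2 : (n : ℚ) * p / q = (n : ℚ) * a / L := by
    rw [mul_div_assoc, mul_div_assoc, ha]
  have hb2 : (n : ℚ) * p' / q' = (n : ℚ) * b / L := by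
    rw [mul_div_assoc, mul_div_assoc, hb]
  rw [ha2, hb2] at hceil
  rcases lt_or_gt_of_ne hab with hlt | hgt
  · exact absurd hceil (ne_of_lt (ceil_lt_ceil_aux n L a b hL0 h hlt))
  · exact absurd hceil.symm (ne_of_lt (ceil_lt_ceil_aux n L b a hL0 h hgt))
end

section
/- The clique number of the enhanced power graph of a finite group G equals the maximum order of an element of G. -/
def enhancedPowerGraph (G : Type*) [Group G] : SimpleGraph G where
  Adj x y := x ≠ y ∧ IsCyclic (Subgroup.closure {x, y} : Subgroup G)
  symm := by
    constructor
    intro x y ⟨hne, hc⟩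
    exact ⟨hne.symm, by rwa [Set.pair_comm]⟩
  loopless := by constructor; intro x ⟨hne, _⟩; exact hne rfl

open Subgroup Finset

section Aux

variable {G : Type*} [Group G]

lemma zpowers_isCyclic' (g : G) : IsCyclic (Subgroup.zpowers g) := by
  refine ⟨⟨g, Subgroup.mem_zpowers g⟩, ?_⟩
  rintro ⟨x, hx⟩
  obtain ⟨k, rfl⟩ := Subgroup.mem_zpowers_iff.mp hx
  exact Subgroup.mem_zpowers_iff.mpr ⟨k, Subtype.ext (by simp)⟩

lemma clique_cyclic {t : Finset G} (ht : (enhancedPowerGraph G).IsClique ↑t)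
    {x y : G} (hx : x ∈ t) (hy : y ∈ t) :
    IsCyclic (Subgroup.closure ({x, y} : Set G) : Subgroup G) := by
  by_cases hxy : x = y
  · subst hxy
    rw [Set.pair_eq_singleton, ← Subgroup.zpowers_eq_closure]
    exact zpowers_isCyclic' x
  · exact (ht (Finset.mem_coe.mpr hx) (Finset.mem_coe.mpr hy) hxy).2

lemma clique_commute {t : Finset G} (ht : (enhancedPowerGraph G).IsClique ↑t)
    {x y : G} (hx : x ∈ t) (hy : y ∈ t) : Commute x y := by
  have hc := clique_cyclic ht hx hy
  letI : CommGroup (Subgroup.closure ({x, y} : Set G) : Subgroup G) := IsCyclic.commGroup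
  have hx' : x ∈ Subgroup.closure ({x, y} : Set G) :=
    Subgroup.subset_closure (Set.mem_insert _ _)
  have hy' : y ∈ Subgroup.closure ({x, y} : Set G) :=
    Subgroup.subset_closure (Set.mem_insert_of_mem _ rfl)
  have := mul_comm (⟨x, hx'⟩ : Subgroup.closure ({x, y} : Set G)) ⟨y, hy'⟩
  exact congrArg Subtype.val this

lemma exists_orderOf_lcm {t : Finset G} (hcomm : ∀ x ∈ t, ∀ y ∈ t, Commute x y) :
    ∃ z ∈ Subgroup.closure (t : Set G), orderOf z = t.lcm orderOf := by
  classical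
  induction t using Finset.induction_on with
  | empty => exact ⟨1, Subgroup.one_mem _, by simp⟩
  | @insert a r ha ih =>
    obtain ⟨z, hzmem, hzord⟩ := ih (fun x hx y hy =>
      hcomm x (Finset.mem_insert_of_mem hx) y (Finset.mem_insert_of_mem hy))
    have hcaz : Commute a z := by
      refine Subgroup.closure_induction
        (fun x hx => hcomm a (Finset.mem_insert_self a r) x
          (Finset.mem_insert_of_mem (Finset.mem_coe.mp hx)))
        (Commute.one_right a)
        (fun x y _ _ h1 h2 => h1.mul_right h2)
        (fun x _ h => h.inv_right) hzmem
    obtain ⟨w, hwmem, hword⟩ := hcaz.exists_orderOf_eq_lcm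
    have ha' : a ∈ Subgroup.closure (↑(insert a r) : Set G) :=
      Subgroup.subset_closure (by simp)
    have hz' : z ∈ Subgroup.closure (↑(insert a r) : Set G) :=
      Subgroup.closure_mono (Finset.coe_subset.mpr (Finset.subset_insert a r)) hzmem
    refine ⟨w, ?_, ?_⟩
    · have hle : Submonoid.closure {a, z} ≤
          (Subgroup.closure (↑(insert a r) : Set G)).toSubmonoid := by
        rw [Submonoid.closure_le]
        rintro u (rfl | rfl)
        · exact ha'
        · exact hz'
      exact hle hwmem
    · rw [Finset.lcm_insert, ← hzord, lcm_eq_nat_lcm]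
      exact hword

lemma mem_zpowers_of_orderOf_eq [Finite G] {x y : G}
    (hc : IsCyclic (Subgroup.closure ({x, y} : Set G) : Subgroup G))
    (h : orderOf x = orderOf y) : x ∈ Subgroup.zpowers y := by
  classical
  set K := (Subgroup.closure ({x, y} : Set G) : Subgroup G) with hK
  have hxK : x ∈ K := Subgroup.subset_closure (Set.mem_insert _ _)
  have hyK : y ∈ K := Subgroup.subset_closure (Set.mem_insert_of_mem _ rfl)
  letI : Fintype K := Fintype.ofFinite K
  set n := orderOf y with hn
  have hn0 : 0 < n := orderOf_pos y
  set x' : K := ⟨x, hxK⟩ with hx'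
  set y' : K := ⟨y, hyK⟩ with hy'
  have hox : orderOf x' = n := by rw [hx', Subgroup.orderOf_mk, h]
  have hoy : orderOf y' = n := by rw [hy', Subgroup.orderOf_mk]
  set A : Finset K := Finset.univ.filter (fun a => a ∈ Subgroup.zpowers y') with hA
  set B : Finset K := Finset.univ.filter (fun a : K => a ^ n = 1) with hB
  have hAB : A ⊆ B := by
    intro a haA
    rw [hA, Finset.mem_filter] at haA
    rw [hB, Finset.mem_filter]
    refine ⟨Finset.mem_univ _, ?_⟩
    rw [← hoy]
    exact orderOf_dvd_iff_pow_eq_one.mp (orderOf_dvd_of_mem_zpowers haA.2) |>.symm ▸ rfl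
  have hcardA : A.card = n := by
    have h1 : A.card = Fintype.card {a : K // a ∈ Subgroup.zpowers y'} :=
      (Fintype.card_subtype _).symm
    rw [h1, ← Nat.card_eq_fintype_card]
    have : Nat.card (Subgroup.zpowers y') = orderOf y' := Nat.card_zpowers y'
    rw [← hoy]
    exact this
  have hcardB : B.card ≤ n := IsCyclic.card_pow_eq_one_le hn0
  have hEq : A = B := Finset.eq_of_subset_of_card_le hAB (hcardB.trans_eq hcardA.symm)
  have hxB : x' ∈ B := by
    rw [hB, Finset.mem_filter]
    exact ⟨Finset.mem_univ _, by rw [← hox]; exact pow_orderOf_eq_one x'⟩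
  have hxA : x' ∈ A := hEq ▸ hxB
  rw [hA, Finset.mem_filter] at hxA
  obtain ⟨k, hk⟩ := Subgroup.mem_zpowers_iff.mp hxA.2
  exact Subgroup.mem_zpowers_iff.mpr ⟨k, by simpa using congrArg Subtype.val hk⟩

lemma clique_card_le [Fintype G] {t : Finset G}
    (ht : (enhancedPowerGraph G).IsClique ↑t) : ∃ z : G, t.card ≤ orderOf z := by
  classical
  obtain ⟨z, _, hzord⟩ := exists_orderOf_lcm (fun x hx y hy => clique_commute ht hx hy)
  refine ⟨z, ?_⟩
  set L := t.lcm orderOf with hL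
  have hL0 : L ≠ 0 := hzord ▸ (orderOf_pos z).ne'
  have hfiber : ∀ n ∈ t.image orderOf,
      (t.filter fun s => orderOf s = n).card ≤ n.totient := by
    intro n hn
    obtain ⟨s₀, hs₀t, hs₀⟩ := Finset.mem_image.mp hn
    letI : Fintype (Subgroup.zpowers s₀) := Fintype.ofFinite _
    haveI : IsCyclic (Subgroup.zpowers s₀) := zpowers_isCyclic' s₀
    have hcard : Fintype.card (Subgroup.zpowers s₀) = n := by
      rw [← Nat.card_eq_fintype_card, Nat.card_zpowers, hs₀]
    have htot := IsCyclic.card_orderOf_eq_totient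
      (α := Subgroup.zpowers s₀) (d := n) (hcard ▸ dvd_refl n)
    have hmem : ∀ s ∈ t.filter (fun s => orderOf s = n), s ∈ Subgroup.zpowers s₀ := by
      intro s hs
      rw [Finset.mem_filter] at hs
      exact mem_zpowers_of_orderOf_eq (clique_cyclic ht hs.1 hs₀t) (by rw [hs.2, hs₀])
    have hinj : (t.filter fun s => orderOf s = n).card ≤
        (Finset.univ.filter fun a : Subgroup.zpowers s₀ => orderOf a = n).card := by
      refine Finset.card_le_card_of_injOn
        (fun s => if h : s ∈ Subgroup.zpowers s₀ then (⟨s, h⟩ : Subgroup.zpowers s₀) else 1)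
        ?_ ?_
      · intro s hs
        show (if h : s ∈ Subgroup.zpowers s₀ then (⟨s, h⟩ : Subgroup.zpowers s₀) else 1) ∈ _
        rw [dif_pos (hmem s hs)]
        rw [Finset.mem_coe, Finset.mem_filter] at hs ⊢
        exact ⟨Finset.mem_univ _, by rw [Subgroup.orderOf_mk]; exact hs.2⟩
      · intro s1 hs1 s2 hs2 hf
        simp only [dif_pos (hmem s1 (Finset.mem_coe.mp hs1)),
          dif_pos (hmem s2 (Finset.mem_coe.mp hs2))] at hf
        exact congrArg Subtype.val hf
    calc (t.filter fun s => orderOf s = n).card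
        ≤ (Finset.univ.filter fun a : Subgroup.zpowers s₀ => orderOf a = n).card := hinj
      _ = n.totient := htot
  have himg : t.image orderOf ⊆ L.divisors := by
    intro n hn
    obtain ⟨s, hst, rfl⟩ := Finset.mem_image.mp hn
    exact Nat.mem_divisors.mpr ⟨Finset.dvd_lcm hst, hL0⟩
  calc t.card = ∑ n ∈ t.image orderOf, (t.filter fun s => orderOf s = n).card :=
        Finset.card_eq_sum_card_image orderOf t
    _ ≤ ∑ n ∈ t.image orderOf, n.totient := Finset.sum_le_sum hfiber
    _ ≤ ∑ n ∈ L.divisors, n.totient :=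
        Finset.sum_le_sum_of_subset himg
    _ = L := Nat.sum_totient L
    _ = orderOf z := hzord.symm

end Aux

theorem stmt_6 {G : Type*} [Group G] [Fintype G] :
    (enhancedPowerGraph G).cliqueNum = Finset.univ.sup (fun g : G => orderOf g) := by
  classical
  apply le_antisymm
  · obtain ⟨s, hs⟩ := (enhancedPowerGraph G).exists_isNClique_cliqueNum
    obtain ⟨z, hz⟩ := clique_card_le hs.isClique
    rw [← hs.card_eq]
    exact hz.trans (Finset.le_sup (Finset.mem_univ z))
  · refine Finset.sup_le fun g _ => ?_
    letI : Fintype (Subgroup.zpowers g : Set G) := Fintype.ofFinite _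
    set S : Finset G := (Subgroup.zpowers g : Set G).toFinset with hS
    haveI : IsCyclic (Subgroup.zpowers g) := zpowers_isCyclic' g
    have hclique : (enhancedPowerGraph G).IsClique ↑S := by
      intro x hx y hy hxy
      rw [Finset.mem_coe, hS, Set.mem_toFinset] at hx hy
      refine ⟨hxy, ?_⟩
      have hle : Subgroup.closure {x, y} ≤ Subgroup.zpowers g := by
        rw [Subgroup.closure_le]
        rintro u (rfl | rfl)
        · exact hx
        · exact hy
      exact Subgroup.isCyclic_of_le hle
    have hcard : S.card = orderOf g := by
      rw [hS, Set.toFinset_card, ← Nat.card_eq_fintype_card]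
      exact Nat.card_zpowers g
    calc orderOf g = S.card := hcard.symm
      _ ≤ (enhancedPowerGraph G).cliqueNum :=
          SimpleGraph.IsClique.card_le_cliqueNum (tc := hclique)
end

section
/- Let G be a finite group and Δ(G) the graph on G where x ~ y iff ⟨x,y⟩ is cyclic and neither is a power of the other. Then the clique number of Δ(G) equals max over n in Ω(G) of α(n), where Ω(G) is the set of element orders of G and α(n) is the maximum size of an antichain in the divisor lattice of n. -/
def deltaGraph (G : Type*) [Group G] : SimpleGraph G where
  Adj x y := x ≠ y ∧ IsCyclic (Subgroup.closure {x, y} : Subgroup G) ∧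
    x ∉ Subgroup.zpowers y ∧ y ∉ Subgroup.zpowers x
  symm := by
    constructor
    intro x y ⟨hne, hc, hxy, hyx⟩
    exact ⟨hne.symm, by rwa [Set.pair_comm], hyx, hxy⟩
  loopless := by constructor; intro x ⟨hne, _⟩; exact hne rfl

/-- `α n`: the maximum size of an antichain (under divisibility) in the divisor
lattice of `n`. -/
noncomputable def maxDivisorAntichain (n : ℕ) : ℕ :=
  sSup {k | ∃ A : Finset ℕ, ↑A ⊆ {d | d ∣ n} ∧
    IsAntichain (· ∣ ·) (A : Set ℕ) ∧ A.card = k}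

set_option linter.unusedSectionVars false

namespace Stmt14Aux

open Subgroup

private lemma nat_div_dvd_div {A B n : ℕ} (hA : 0 < A) (h1 : A ∣ B) (h2 : B ∣ n) :
    n / B ∣ n / A := by
  obtain ⟨c, rfl⟩ := h1
  obtain ⟨e, rfl⟩ := h2
  rcases Nat.eq_zero_or_pos c with rfl | hc
  · simp
  rcases Nat.eq_zero_or_pos e with rfl | he
  · simp
  rw [Nat.mul_div_cancel_left _ (by positivity : 0 < A * c), mul_assoc,
    Nat.mul_div_cancel_left _ hA]
  exact ⟨c, mul_comm c e⟩

variable {G : Type*} [Group G] [Finite G]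

private lemma pow_mem_zpowers_pow {z : G} (a b : ℕ)
    (h : orderOf (z ^ a) ∣ orderOf (z ^ b)) : z ^ a ∈ zpowers (z ^ b) := by
  set n := orderOf z with hn
  have hnpos : 0 < n := orderOf_pos z
  have hoa : orderOf (z ^ a) = n / Nat.gcd n a := orderOf_pow z
  have hob : orderOf (z ^ b) = n / Nat.gcd n b := orderOf_pow z
  have hgbn : Nat.gcd n b ∣ n := Nat.gcd_dvd_left n b
  have hgan : Nat.gcd n a ∣ n := Nat.gcd_dvd_left n a
  have hgb : Nat.gcd n b = n / orderOf (z ^ b) := by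
    rw [hob, Nat.div_div_self hgbn hnpos.ne']
  have hga : Nat.gcd n a = n / orderOf (z ^ a) := by
    rw [hoa, Nat.div_div_self hgan hnpos.ne']
  have hdd : n / orderOf (z ^ b) ∣ n / orderOf (z ^ a) :=
    nat_div_dvd_div (orderOf_pos _) h (hob ▸ Nat.div_dvd_of_dvd hgbn)
  have hdvd_a : Nat.gcd n b ∣ a := by
    rw [hgb]
    exact (hga ▸ hdd).trans (Nat.gcd_dvd_right n a)
  have hbez : z ^ (Nat.gcd n b) ∈ zpowers (z ^ b) := by
    have h1 : ((Nat.gcd n b : ℤ)) = n * Nat.gcdA n b + b * Nat.gcdB n b := Nat.gcd_eq_gcd_ab n b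
    have : z ^ ((Nat.gcd n b : ℤ)) = (z ^ (n : ℤ)) ^ (Nat.gcdA n b) * (z ^ (b : ℤ)) ^ (Nat.gcdB n b) := by
      rw [← zpow_mul, ← zpow_mul, ← zpow_add, ← h1]
    have hzn : (z : G) ^ ((n : ℤ)) = 1 := by
      rw [zpow_natCast]; exact pow_orderOf_eq_one z
    rw [zpow_natCast] at this
    rw [this, hzn, one_zpow, one_mul]
    rw [← zpow_natCast z b]
    exact zpow_mem (mem_zpowers _) _
  obtain ⟨k, hk⟩ := hdvd_a
  rw [hk, pow_mul]
  exact Subgroup.pow_mem _ hbez k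

lemma mem_zpowers_of_orderOf_dvd {x y z : G} (hx : x ∈ zpowers z) (hy : y ∈ zpowers z)
    (h : orderOf x ∣ orderOf y) : x ∈ zpowers y := by
  obtain ⟨a, ha⟩ := mem_powers_iff_mem_zpowers.mpr hx
  obtain ⟨b, hb⟩ := mem_powers_iff_mem_zpowers.mpr hy
  rw [← ha, ← hb] at h ⊢
  exact pow_mem_zpowers_pow a b h

section
variable {G : Type*} [Group G]

instance isCyclic_zpowers (c : G) : IsCyclic (zpowers c) := by
  refine ⟨⟨⟨c, mem_zpowers c⟩, ?_⟩⟩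
  rintro ⟨h, k, rfl⟩
  exact ⟨k, Subtype.ext (by simp)⟩

lemma isCyclic_of_le_zpowers {H : Subgroup G} {c : G} (h : H ≤ zpowers c) : IsCyclic H := by
  have e := Subgroup.subgroupOfEquivOfLe h
  exact isCyclic_of_surjective e e.surjective

lemma exists_common_bound_of_cyclic {x y : G}
    (h : IsCyclic (Subgroup.closure {x, y} : Subgroup G)) :
    ∃ c : G, x ∈ zpowers c ∧ y ∈ zpowers c := by
  obtain ⟨g, hg⟩ := h
  refine ⟨(g : G), ?_, ?_⟩
  · have hx : x ∈ Subgroup.closure {x, y} := subset_closure (by simp)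
    obtain ⟨k, hk⟩ := hg ⟨x, hx⟩
    exact ⟨k, by simpa using congrArg Subtype.val hk⟩
  · have hy : y ∈ Subgroup.closure {x, y} := subset_closure (by simp)
    obtain ⟨k, hk⟩ := hg ⟨y, hy⟩
    exact ⟨k, by simpa using congrArg Subtype.val hk⟩

lemma cyclic_of_common_bound {x y c : G} (hx : x ∈ zpowers c) (hy : y ∈ zpowers c) :
    IsCyclic (Subgroup.closure {x, y} : Subgroup G) :=
  isCyclic_of_le_zpowers ((Subgroup.closure_le _).mpr (by
    rintro a ha
    rcases ha with rfl | rfl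
    · exact hx
    · exact hy))

end

section
variable {G : Type*} [Group G] [Finite G]

/-- the p-part of an element -/
noncomputable def pPart (x : G) (p : ℕ) : G := x ^ (ordCompl[p] (orderOf x))

/-- the p-complement part of an element -/
noncomputable def pCompl (x : G) (p : ℕ) : G := x ^ (ordProj[p] (orderOf x))

lemma pPart_mem_zpowers (x : G) (p : ℕ) : pPart x p ∈ zpowers x := Subgroup.pow_mem _ (mem_zpowers x) _

lemma pCompl_mem_zpowers (x : G) (p : ℕ) : pCompl x p ∈ zpowers x := Subgroup.pow_mem _ (mem_zpowers x) _

lemma orderOf_pPart (x : G) (p : ℕ) : orderOf (pPart x p) = ordProj[p] (orderOf x) := by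
  have hn : orderOf x ≠ 0 := (orderOf_pos x).ne'
  rw [pPart, orderOf_pow, Nat.gcd_eq_right (Nat.ordCompl_dvd _ _),
    Nat.div_div_self (Nat.ordProj_dvd _ _) hn]

lemma orderOf_pCompl (x : G) (p : ℕ) : orderOf (pCompl x p) = ordCompl[p] (orderOf x) := by
  rw [pCompl, orderOf_pow, Nat.gcd_eq_right (Nat.ordProj_dvd _ _)]

lemma zpowers_eq_of_orderOf_eq {x y z : G} (hx : x ∈ zpowers z) (hy : y ∈ zpowers z)
    (h : orderOf x = orderOf y) : zpowers x = zpowers y :=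
  le_antisymm (zpowers_le.mpr (mem_zpowers_of_orderOf_dvd hx hy h.dvd))
    (zpowers_le.mpr (mem_zpowers_of_orderOf_dvd hy hx h.symm.dvd))

lemma mem_zpowers_pPart_mul_pCompl (x : G) {p : ℕ} (hp : p.Prime) :
    x ∈ zpowers (pPart x p * pCompl x p) := by
  have hn : orderOf x ≠ 0 := (orderOf_pos x).ne'
  have hmul : pPart x p * pCompl x p = x ^ (ordCompl[p] (orderOf x) + ordProj[p] (orderOf x)) :=
    (pow_add x _ _).symm
  have hqc : ordProj[p] (orderOf x) * ordCompl[p] (orderOf x) = orderOf x :=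
    Nat.ordProj_mul_ordCompl_eq_self _ _
  have hcopqc : Nat.Coprime (ordProj[p] (orderOf x)) (ordCompl[p] (orderOf x)) :=
    Nat.Coprime.pow_left _ (Nat.coprime_ordCompl hp hn)
  have hcop : Nat.Coprime (ordCompl[p] (orderOf x) + ordProj[p] (orderOf x)) (orderOf x) := by
    have h1 : Nat.Coprime (ordCompl[p] (orderOf x) + ordProj[p] (orderOf x))
        (ordProj[p] (orderOf x) * ordCompl[p] (orderOf x)) := by
      refine Nat.Coprime.mul_right (Nat.coprime_add_self_left.mpr hcopqc.symm) ?_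
      rw [add_comm]
      exact Nat.coprime_add_self_left.mpr hcopqc
    rwa [hqc] at h1
  have horder : orderOf (pPart x p * pCompl x p) = orderOf x := by
    rw [hmul, orderOf_pow, Nat.Coprime.gcd_eq_one hcop.symm, Nat.div_one]
  exact mem_zpowers_of_orderOf_dvd (mem_zpowers x)
    (hmul ▸ Subgroup.pow_mem _ (mem_zpowers x) _) horder.symm.dvd
lemma pPart_eq_one_of_not_dvd {x : G} {p : ℕ} (h : ¬ p ∣ orderOf x) : pPart x p = 1 := by
  rw [pPart, Nat.factorization_eq_zero_of_not_dvd h, pow_zero, Nat.div_one, pow_orderOf_eq_one]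


end

def Comp {H : Type*} [Group H] (z w : H) : Prop :=
  ∀ p : ℕ, p.Prime → pPart z p ∈ zpowers (pPart w p) ∨ pPart w p ∈ zpowers (pPart z p)

section
variable {H : Type*} [CommGroup H] [Finite H]

private def Concl (z w : H) : Prop :=
  ∃ c : H, z ∈ zpowers c ∧ w ∈ zpowers c ∧ orderOf c ∣ Nat.lcm (orderOf z) (orderOf w)

private lemma comp_symm {z w : H} (h : Comp z w) : Comp w z := fun p hp => (h p hp).symm

private lemma crux_step {N : ℕ}
    (IH : ∀ z w : H, orderOf z * orderOf w < N → Comp z w → Concl z w)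
    (z w : H) (p : ℕ) (hp : p.Prime)
    (hmeas : ordCompl[p] (orderOf z) * ordCompl[p] (orderOf w) < N)
    (hcomp : Comp z w) (horient : pPart z p ∈ zpowers (pPart w p)) : Concl z w := by
  set n := orderOf z with hn
  set m := orderOf w with hm
  have hn0 : n ≠ 0 := (orderOf_pos z).ne'
  have hm0 : m ≠ 0 := (orderOf_pos w).ne'
  set z' := pCompl z p with hz'
  set w' := pCompl w p with hw'
  have hoz' : orderOf z' = ordCompl[p] n := orderOf_pCompl z p
  have how' : orderOf w' = ordCompl[p] m := orderOf_pCompl w p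
  have hnz' : ¬ p ∣ orderOf z' := hoz' ▸ Nat.not_dvd_ordCompl hp hn0
  have hnw' : ¬ p ∣ orderOf w' := how' ▸ Nat.not_dvd_ordCompl hp hm0
  -- comparability for the p-complements
  have hcomp' : Comp z' w' := by
    intro q hq
    rcases eq_or_ne q p with rfl | hqp
    · left; rw [pPart_eq_one_of_not_dvd hnz']; exact one_mem _
    · have hfz : (orderOf z').factorization q = n.factorization q := by
        rw [hoz', Nat.factorization_ordCompl, Finsupp.erase_ne hqp]
      have hfw : (orderOf w').factorization q = m.factorization q := by
        rw [how', Nat.factorization_ordCompl, Finsupp.erase_ne hqp]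
      have hzz : zpowers (pPart z' q) = zpowers (pPart z q) := by
        refine zpowers_eq_of_orderOf_eq (x := pPart z' q) (y := pPart z q) (z := z)
          ((zpowers_le.mpr (pCompl_mem_zpowers z p)) (pPart_mem_zpowers z' q))
          (pPart_mem_zpowers z q) ?_
        rw [orderOf_pPart, orderOf_pPart, hfz]
      have hww : zpowers (pPart w' q) = zpowers (pPart w q) := by
        refine zpowers_eq_of_orderOf_eq (x := pPart w' q) (y := pPart w q) (z := w)
          ((zpowers_le.mpr (pCompl_mem_zpowers w p)) (pPart_mem_zpowers w' q))
          (pPart_mem_zpowers w q) ?_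
        rw [orderOf_pPart, orderOf_pPart, hfw]
      have e1 : pPart z' q ∈ zpowers (pPart z q) := hzz ▸ mem_zpowers _
      have e2 : pPart w' q ∈ zpowers (pPart w q) := hww ▸ mem_zpowers _
      have e1' : pPart z q ∈ zpowers (pPart z' q) := hzz.symm ▸ mem_zpowers _
      have e2' : pPart w q ∈ zpowers (pPart w' q) := hww.symm ▸ mem_zpowers _
      rcases hcomp q hq with h | h
      · exact Or.inl ((zpowers_le.mpr e2') ((zpowers_le.mpr h) e1))
      · exact Or.inr ((zpowers_le.mpr e1') ((zpowers_le.mpr h) e2))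
  obtain ⟨c', hz'c, hw'c, hc'⟩ := IH z' w' (by rw [hoz', how']; exact hmeas) hcomp'
  rw [hoz', how'] at hc'
  -- p does not divide the order of c'
  have hlcm_dvd : Nat.lcm (ordCompl[p] n) (ordCompl[p] m) ∣ ordCompl[p] n * ordCompl[p] m :=
    Nat.lcm_dvd_mul _ _
  have hpnm : ¬ p ∣ ordCompl[p] n * ordCompl[p] m := by
    rw [hp.dvd_mul]
    rintro (h | h)
    · exact Nat.not_dvd_ordCompl hp hn0 h
    · exact Nat.not_dvd_ordCompl hp hm0 h
  have hpc' : ¬ p ∣ orderOf c' := fun h => hpnm (h.trans (hc'.trans hlcm_dvd))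
  set b := pPart w p with hb
  have hob : orderOf b = ordProj[p] m := orderOf_pPart w p
  have hcopb : Nat.Coprime (orderOf b) (orderOf c') := by
    rw [hob]
    exact Nat.Coprime.pow_left _ ((hp.coprime_iff_not_dvd).mpr hpc')
  set c := b * c' with hc
  have hoc : orderOf c = orderOf b * orderOf c' :=
    (Commute.all b c').orderOf_mul_eq_mul_orderOf_of_coprime hcopb
  -- b and c' are members of zpowers c
  have hb_mem : b ∈ zpowers c := by
    have h1 : c ^ (orderOf c') = b ^ (orderOf c') := by
      rw [hc, mul_pow, pow_orderOf_eq_one, mul_one]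
    have h2 : b ∈ zpowers (b ^ (orderOf c')) := by
      refine mem_zpowers_of_orderOf_dvd (mem_zpowers b) (Subgroup.pow_mem _ (mem_zpowers b) _) ?_
      rw [orderOf_pow, Nat.Coprime.gcd_eq_one hcopb, Nat.div_one]
    rw [← h1] at h2
    exact (zpowers_le.mpr (Subgroup.pow_mem _ (mem_zpowers c) _)) h2
  have hc'_mem : c' ∈ zpowers c := by
    have h1 : c ^ (orderOf b) = c' ^ (orderOf b) := by
      rw [hc, mul_pow, pow_orderOf_eq_one, one_mul]
    have h2 : c' ∈ zpowers (c' ^ (orderOf b)) := by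
      refine mem_zpowers_of_orderOf_dvd (mem_zpowers c') (Subgroup.pow_mem _ (mem_zpowers c') _) ?_
      rw [orderOf_pow, Nat.Coprime.gcd_eq_one hcopb.symm, Nat.div_one]
    rw [← h1] at h2
    exact (zpowers_le.mpr (Subgroup.pow_mem _ (mem_zpowers c) _)) h2
  refine ⟨c, ?_, ?_, ?_⟩
  · -- z ∈ zpowers c
    have h1 : pPart z p * pCompl z p ∈ zpowers c :=
      mul_mem ((zpowers_le.mpr hb_mem) horient) ((zpowers_le.mpr hc'_mem) hz'c)
    exact (zpowers_le.mpr h1) (mem_zpowers_pPart_mul_pCompl z hp)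
  · -- w ∈ zpowers c
    have h1 : pPart w p * pCompl w p ∈ zpowers c :=
      mul_mem hb_mem ((zpowers_le.mpr hc'_mem) hw'c)
    exact (zpowers_le.mpr h1) (mem_zpowers_pPart_mul_pCompl w hp)
  · -- orderOf c ∣ lcm n m
    have hL0 : Nat.lcm n m ≠ 0 := Nat.lcm_ne_zero hn0 hm0
    have h1 : orderOf b ∣ ordProj[p] (Nat.lcm n m) := by
      rw [hob]
      refine pow_dvd_pow p ?_
      rw [Nat.factorization_lcm hn0 hm0]
      exact le_sup_right (α := ℕ) (a := n.factorization p) (b := m.factorization p)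
    have h2 : orderOf c' ∣ ordCompl[p] (Nat.lcm n m) := by
      refine Nat.dvd_ordCompl_of_dvd_not_dvd ?_ hpc'
      exact hc'.trans (Nat.lcm_dvd ((Nat.ordCompl_dvd n p).trans (Nat.dvd_lcm_left n m))
        ((Nat.ordCompl_dvd m p).trans (Nat.dvd_lcm_right n m)))
    rw [hoc]
    refine Nat.Coprime.mul_dvd_of_dvd_of_dvd ?_ (h1.trans (Nat.ordProj_dvd _ _)) (h2.trans (Nat.ordCompl_dvd _ _))
    rw [hob]
    refine Nat.Coprime.pow_left _ (hp.coprime_iff_not_dvd.mpr ?_)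
    intro hpd
    exact Nat.not_dvd_ordCompl hp hL0 (hpd.trans h2)

private lemma crux_all : ∀ N : ℕ, ∀ z w : H, orderOf z * orderOf w = N → Comp z w → Concl z w := by
  intro N
  induction N using Nat.strong_induction_on with
  | _ N IH =>
    intro z w hN hcomp
    rcases eq_or_ne (orderOf z) 1 with hz1 | hz1
    · exact ⟨w, by rw [orderOf_eq_one_iff.mp hz1]; exact one_mem _, mem_zpowers w,
        Nat.dvd_lcm_right _ _⟩
    rcases eq_or_ne (orderOf w) 1 with hw1 | hw1
    · exact ⟨z, mem_zpowers z, by rw [orderOf_eq_one_iff.mp hw1]; exact one_mem _,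
        Nat.dvd_lcm_left _ _⟩
    obtain ⟨p, hp, hpz⟩ := Nat.exists_prime_and_dvd hz1
    have hn0 : orderOf z ≠ 0 := (orderOf_pos z).ne'
    have hm0 : orderOf w ≠ 0 := (orderOf_pos w).ne'
    have hlt : ordCompl[p] (orderOf z) * ordCompl[p] (orderOf w) < N := by
      rw [← hN]
      have h1 : ordCompl[p] (orderOf z) < orderOf z := by
        apply Nat.div_lt_self (Nat.pos_of_ne_zero hn0)
        exact one_lt_pow₀ hp.one_lt (hp.factorization_pos_of_dvd hn0 hpz).ne'
      have h2 : ordCompl[p] (orderOf w) ≤ orderOf w := Nat.ordCompl_le _ _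
      calc ordCompl[p] (orderOf z) * ordCompl[p] (orderOf w)
          ≤ ordCompl[p] (orderOf z) * orderOf w := Nat.mul_le_mul_left _ h2
        _ < orderOf z * orderOf w := by
            exact (Nat.mul_lt_mul_right (Nat.pos_of_ne_zero hm0)).mpr h1
    have IH' : ∀ z w : H, orderOf z * orderOf w < N → Comp z w → Concl z w :=
      fun a b hab hc => IH _ hab a b rfl hc
    rcases hcomp p hp with horient | horient
    · exact crux_step IH' z w p hp hlt hcomp horient
    · obtain ⟨c, hw, hz, hdvd⟩ := crux_step IH' w z p hp (by rwa [mul_comm]) (comp_symm hcomp) horient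
      exact ⟨c, hz, hw, by rwa [Nat.lcm_comm]⟩

end


-- prime power dividing a finset lcm is achieved by a member
lemma pow_dvd_of_dvd_lcm {ι : Type*} {t : Finset ι} {f : ι → ℕ} (hf : ∀ x ∈ t, f x ≠ 0)
    {p k : ℕ} (hp : p.Prime) (hk : k ≠ 0) (h : p ^ k ∣ t.lcm f) :
    ∃ x ∈ t, p ^ k ∣ f x := by
  classical
  induction t using Finset.induction_on with
  | empty =>
    rw [Finset.lcm_empty, Nat.dvd_one] at h
    have h2 : 1 < p ^ k := one_lt_pow₀ hp.one_lt hk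
    omega
  | @insert a s ha ih =>
    rw [Finset.lcm_insert] at h
    have hfa : f a ≠ 0 := hf a (Finset.mem_insert_self a s)
    have hslcm : s.lcm f ≠ 0 := by
      intro h0
      rw [Finset.lcm_eq_zero_iff] at h0
      obtain ⟨x, hx, hx0⟩ := h0
      exact hf x (Finset.mem_insert_of_mem hx) hx0
    have hL : (Nat.lcm (f a) (s.lcm f)) ≠ 0 := Nat.lcm_ne_zero hfa hslcm
    have hk' : k ≤ (Nat.lcm (f a) (s.lcm f)).factorization p :=
      (Nat.Prime.pow_dvd_iff_le_factorization hp hL).mp h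
    rw [Nat.factorization_lcm hfa hslcm] at hk'
    have : k ≤ (f a).factorization p ∨ k ≤ (s.lcm f).factorization p := by
      have := hk'
      simp only [Finsupp.sup_apply, le_sup_iff] at this
      exact this
    rcases this with h1 | h1
    · exact ⟨a, Finset.mem_insert_self a s,
        (Nat.Prime.pow_dvd_iff_le_factorization hp hfa).mpr h1⟩
    · obtain ⟨x, hx, hx2⟩ := ih (fun x hx => hf x (Finset.mem_insert_of_mem hx))
        ((Nat.Prime.pow_dvd_iff_le_factorization hp hslcm).mpr h1)
      exact ⟨x, Finset.mem_insert_of_mem hx, hx2⟩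

lemma main_bound {H : Type*} [CommGroup H] [Finite H] (t : Finset H)
    (hcomp : ∀ x ∈ t, ∀ y ∈ t, Comp x y) :
    ∃ c : H, (∀ x ∈ t, x ∈ zpowers c) ∧ orderOf c ∣ t.lcm orderOf := by
  classical
  induction t using Finset.induction_on with
  | empty => exact ⟨1, by simp, by simp⟩
  | @insert w s hw ih =>
    obtain ⟨c₀, hc₀mem, hc₀ord⟩ := ih (fun x hx y hy =>
      hcomp x (Finset.mem_insert_of_mem hx) y (Finset.mem_insert_of_mem hy))
    have hcw : Comp c₀ w := by
      intro p hp
      by_cases hp0 : p ∣ orderOf c₀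
      swap
      · left; rw [pPart_eq_one_of_not_dvd hp0]; exact one_mem _
      · set k := (orderOf c₀).factorization p with hk
        have hk0 : k ≠ 0 := (hp.factorization_pos_of_dvd (orderOf_pos c₀).ne' hp0).ne'
        have hpk : p ^ k ∣ s.lcm orderOf := (Nat.ordProj_dvd _ _).trans hc₀ord
        obtain ⟨x, hxs, hxdvd⟩ := pow_dvd_of_dvd_lcm
          (fun x _ => (orderOf_pos x).ne') hp hk0 hpk
        have hxc₀ : orderOf x ∣ orderOf c₀ := orderOf_dvd_of_mem_zpowers (hc₀mem x hxs)
        have hfx : (orderOf x).factorization p = k := by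
          refine le_antisymm ?_ ?_
          · rw [hk]
            exact (Nat.factorization_le_iff_dvd (orderOf_pos x).ne'
              (orderOf_pos c₀).ne').mpr hxc₀ p
          · exact (Nat.Prime.pow_dvd_iff_le_factorization hp (orderOf_pos x).ne').mp hxdvd
        have hzz : zpowers (pPart c₀ p) = zpowers (pPart x p) := by
          refine zpowers_eq_of_orderOf_eq (z := c₀) (pPart_mem_zpowers c₀ p)
            ((zpowers_le.mpr (hc₀mem x hxs)) (pPart_mem_zpowers x p)) ?_
          rw [orderOf_pPart, orderOf_pPart, hfx]
        have e1 : pPart c₀ p ∈ zpowers (pPart x p) := hzz ▸ mem_zpowers _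
        have e1' : pPart x p ∈ zpowers (pPart c₀ p) := hzz.symm ▸ mem_zpowers _
        rcases hcomp x (Finset.mem_insert_of_mem hxs) w (Finset.mem_insert_self w s) p hp with
          h | h
        · exact Or.inl ((zpowers_le.mpr h) e1)
        · exact Or.inr ((zpowers_le.mpr e1') h)
    obtain ⟨c, hcc₀, hcw', hcord⟩ := crux_all _ c₀ w rfl hcw
    refine ⟨c, ?_, ?_⟩
    · intro x hx
      rcases Finset.mem_insert.mp hx with rfl | hx
      · exact hcw'
      · exact (zpowers_le.mpr hcc₀) (hc₀mem x hx)
    · rw [Finset.lcm_insert]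
      refine hcord.trans (Nat.lcm_dvd ?_ ?_)
      · exact hc₀ord.trans (Nat.dvd_lcm_right _ _)
      · exact Nat.dvd_lcm_left _ _

section
variable {G : Type*} [Group G]

lemma closure_commute {S : Set G} (hS : ∀ x ∈ S, ∀ y ∈ S, Commute x y) :
    ∀ a ∈ Subgroup.closure S, ∀ b ∈ Subgroup.closure S, Commute a b := by
  intro a ha b hb
  refine Subgroup.closure_induction₂ (p := fun x y _ _ => Commute x y)
    (fun x y hx hy => hS x hx y hy) (fun x _ => Commute.one_left x) (fun x _ => Commute.one_right x)
    (fun x y z _ _ _ h1 h2 => h1.mul_left h2)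
    (fun y z x _ _ _ h1 h2 => h1.mul_right h2)
    (fun x y _ _ h => h.inv_left)
    (fun x y _ _ h => h.inv_right) ha hb

lemma mem_zpowers_coe_iff {K : Subgroup G} {a b : K} :
    a ∈ zpowers b ↔ (a : G) ∈ zpowers (b : G) := by
  constructor
  · rintro ⟨k, rfl⟩
    exact ⟨k, by simp⟩
  · rintro ⟨k, hk⟩
    exact ⟨k, Subtype.ext (by simpa using hk)⟩

lemma orderOf_coe' {K : Subgroup G} (a : K) : orderOf (a : G) = orderOf a :=
  orderOf_submonoid a

lemma pPart_coe [Finite G] {K : Subgroup G} (a : K) (p : ℕ) :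
    ((pPart a p : K) : G) = pPart (a : G) p := by
  rw [pPart, pPart, orderOf_coe', SubmonoidClass.coe_pow]
end

section main
variable {G : Type*} [Group G] [Fintype G]

lemma antichain_set_bddAbove {n : ℕ} (hn : n ≠ 0) :
    BddAbove {k | ∃ A : Finset ℕ, ↑A ⊆ {d | d ∣ n} ∧
      IsAntichain (· ∣ ·) (A : Set ℕ) ∧ A.card = k} := by
  refine ⟨n.divisors.card, ?_⟩
  rintro k ⟨A, hA, -, rfl⟩
  exact Finset.card_le_card (fun d hd => Nat.mem_divisors.mpr ⟨hA hd, hn⟩)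

lemma lower (g : G) : maxDivisorAntichain (orderOf g) ≤ (deltaGraph G).cliqueNum := by
  classical
  set n := orderOf g with hn
  have hn0 : n ≠ 0 := (orderOf_pos g).ne'
  have hne : {k | ∃ A : Finset ℕ, ↑A ⊆ {d | d ∣ n} ∧
      IsAntichain (· ∣ ·) (A : Set ℕ) ∧ A.card = k}.Nonempty :=
    ⟨0, ∅, by simp, by simp [IsAntichain], rfl⟩
  obtain ⟨A, hAdvd, hAanti, hAcard⟩ :
      maxDivisorAntichain n ∈ {k | ∃ A : Finset ℕ, ↑A ⊆ {d | d ∣ n} ∧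
      IsAntichain (· ∣ ·) (A : Set ℕ) ∧ A.card = k} :=
    Nat.sSup_mem hne (antichain_set_bddAbove hn0)
  have horder : ∀ d ∈ (A : Set ℕ), orderOf (g ^ (n / d)) = d := by
    intro d hd
    have hdn : d ∣ n := hAdvd hd
    rw [orderOf_pow, ← hn, Nat.gcd_eq_right (Nat.div_dvd_of_dvd hdn),
      Nat.div_div_self hdn hn0]
  set f : ℕ → G := fun d => g ^ (n / d) with hf
  have hinj : Set.InjOn f ↑A := by
    intro d hd e he hde
    rw [← horder d hd, ← horder e he]
    exact congrArg orderOf hde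
  have hclique : (deltaGraph G).IsClique ↑(A.image f) := by
    intro x hx y hy hxy
    simp only [Finset.coe_image, Set.mem_image] at hx hy
    obtain ⟨d, hd, rfl⟩ := hx
    obtain ⟨e, he, rfl⟩ := hy
    have hde : d ≠ e := fun h => hxy (by rw [h])
    refine ⟨hxy, cyclic_of_common_bound (Subgroup.pow_mem _ (mem_zpowers g) _)
      (Subgroup.pow_mem _ (mem_zpowers g) _), ?_, ?_⟩
    · intro hmem
      have := orderOf_dvd_of_mem_zpowers hmem
      rw [horder d hd, horder e he] at this
      exact hAanti hd he hde this
    · intro hmem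
      have := orderOf_dvd_of_mem_zpowers hmem
      rw [horder d hd, horder e he] at this
      exact hAanti he hd (Ne.symm hde) this
  have hcard : (A.image f).card = maxDivisorAntichain n := by
    rw [Finset.card_image_of_injOn hinj, hAcard]
  calc maxDivisorAntichain n = (A.image f).card := hcard.symm
    _ ≤ (deltaGraph G).cliqueNum := SimpleGraph.IsClique.card_le_cliqueNum (tc := hclique)

end main

section upper
variable {G : Type*} [Group G] [Fintype G]

lemma upper : (deltaGraph G).cliqueNum ≤
    Finset.univ.sup (fun g : G => maxDivisorAntichain (orderOf g)) := by
  classical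
  obtain ⟨s, hsclique, hscard⟩ := (deltaGraph G).exists_isNClique_cliqueNum
  rw [← hscard]
  -- pairwise commuting
  have hadj : ∀ x ∈ s, ∀ y ∈ s, x ≠ y → (deltaGraph G).Adj x y :=
    fun x hx y hy hne => hsclique hx hy hne
  have hbound : ∀ x ∈ s, ∀ y ∈ s, x ≠ y → ∃ c : G, x ∈ zpowers c ∧ y ∈ zpowers c := by
    intro x hx y hy hne
    exact exists_common_bound_of_cyclic (hadj x hx y hy hne).2.1
  have hcomm : ∀ x ∈ (↑s : Set G), ∀ y ∈ (↑s : Set G), Commute x y := by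
    intro x hx y hy
    rcases eq_or_ne x y with rfl | hne
    · exact Commute.refl x
    · obtain ⟨c, ⟨i, hi⟩, ⟨j, hj⟩⟩ := hbound x hx y hy hne
      rw [← hi, ← hj]
      exact Commute.zpow_zpow (Commute.refl c) i j
  set K := Subgroup.closure (↑s : Set G) with hK
  letI : CommGroup ↥K :=
    { (inferInstance : Group ↥K) with
      mul_comm := fun a b => Subtype.ext (closure_commute hcomm (↑a) a.2 (↑b) b.2) }
  set lift : ∀ x ∈ s, ↥K := fun x hx => ⟨x, Subgroup.subset_closure hx⟩ with hlift
  set t : Finset ↥K := s.attach.image (fun x => (⟨x.1, Subgroup.subset_closure x.2⟩ : ↥K))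
    with ht
  have htmem : ∀ x (hx : x ∈ s), (⟨x, Subgroup.subset_closure hx⟩ : ↥K) ∈ t := by
    intro x hx
    exact Finset.mem_image_of_mem _ (Finset.mem_attach s ⟨x, hx⟩)
  have htmem' : ∀ a ∈ t, (a : G) ∈ s := by
    intro a ha
    rw [ht] at ha
    obtain ⟨⟨x, hx⟩, -, rfl⟩ := Finset.mem_image.mp ha
    exact hx
  -- comparability of p-parts in G for pairs in s
  have hcompG : ∀ x ∈ s, ∀ y ∈ s, ∀ p : ℕ, p.Prime →
      pPart x p ∈ zpowers (pPart y p) ∨ pPart y p ∈ zpowers (pPart x p) := by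
    intro x hx y hy p hp
    rcases eq_or_ne x y with rfl | hne
    · exact Or.inl (mem_zpowers _)
    · obtain ⟨c, hxc, hyc⟩ := hbound x hx y hy hne
      have hx' : pPart x p ∈ zpowers c := (zpowers_le.mpr hxc) (pPart_mem_zpowers x p)
      have hy' : pPart y p ∈ zpowers c := (zpowers_le.mpr hyc) (pPart_mem_zpowers y p)
      rcases le_total ((orderOf x).factorization p) ((orderOf y).factorization p) with h | h
      · refine Or.inl (mem_zpowers_of_orderOf_dvd hx' hy' ?_)
        rw [orderOf_pPart, orderOf_pPart]
        exact pow_dvd_pow p h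
      · refine Or.inr (mem_zpowers_of_orderOf_dvd hy' hx' ?_)
        rw [orderOf_pPart, orderOf_pPart]
        exact pow_dvd_pow p h
  have hcomp : ∀ a ∈ t, ∀ b ∈ t, Comp a b := by
    intro a ha b hb p hp
    have h := hcompG (↑a) (htmem' a ha) (↑b) (htmem' b hb) p hp
    rcases h with h | h
    · left
      rw [mem_zpowers_coe_iff, pPart_coe, pPart_coe]
      exact h
    · right
      rw [mem_zpowers_coe_iff, pPart_coe, pPart_coe]
      exact h
  obtain ⟨c, hcall, -⟩ := main_bound t hcomp
  -- back in G
  have hmemzp : ∀ x ∈ s, x ∈ zpowers (c : G) := by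
    intro x hx
    have := hcall _ (htmem x hx)
    exact mem_zpowers_coe_iff.mp this
  have hdvd : ∀ x ∈ s, orderOf x ∣ orderOf (c : G) :=
    fun x hx => orderOf_dvd_of_mem_zpowers (hmemzp x hx)
  -- the image of orders is an antichain
  have hinj : Set.InjOn orderOf (↑s : Set G) := by
    intro x hx y hy hxy
    by_contra hne
    obtain ⟨-, -, hnx, -⟩ := hadj x hx y hy hne
    exact hnx (mem_zpowers_of_orderOf_dvd (hmemzp x hx) (hmemzp y hy) hxy.dvd)
  set A : Finset ℕ := s.image orderOf with hA
  have hAsub : ↑A ⊆ {d | d ∣ orderOf (c : G)} := by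
    rintro d hd
    simp only [hA, Finset.coe_image, Set.mem_image] at hd
    obtain ⟨x, hx, rfl⟩ := hd
    exact hdvd x hx
  have hAanti : IsAntichain (· ∣ ·) (A : Set ℕ) := by
    rintro a ha b hb hab hdvd'
    simp only [hA, Finset.coe_image, Set.mem_image] at ha hb
    obtain ⟨x, hx, rfl⟩ := ha
    obtain ⟨y, hy, rfl⟩ := hb
    have hne : x ≠ y := fun h => hab (by rw [h])
    obtain ⟨-, -, hnx, -⟩ := hadj x hx y hy hne
    exact hnx (mem_zpowers_of_orderOf_dvd (hmemzp x hx) (hmemzp y hy) hdvd')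
  have hAcard : A.card = s.card := Finset.card_image_of_injOn hinj
  have h1 : s.card ≤ maxDivisorAntichain (orderOf (c : G)) :=
    le_csSup (antichain_set_bddAbove (orderOf_pos ((c : G))).ne')
      ⟨A, hAsub, hAanti, hAcard⟩
  exact h1.trans (Finset.le_sup (f := fun g : G => maxDivisorAntichain (orderOf g)) (Finset.mem_univ (c : G)))

end upper

end Stmt14Aux

theorem stmt_14 {G : Type*} [Group G] [Fintype G] :
    (deltaGraph G).cliqueNum =
      Finset.univ.sup (fun g : G => maxDivisorAntichain (orderOf g)) :=
  le_antisymm Stmt14Aux.upper (Finset.sup_le (fun g _ => Stmt14Aux.lower g))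
end

section
/- In the symmetric group S_8, the five elements (1 2), (3 4 5), (6 7), (1 2 3), (4 5 6 7 8) induce a 5-cycle in the graph Δ(S_8), where x ~ y iff ⟨x,y⟩ is cyclic and neither is a power of the other. -/
set_option maxRecDepth 4000

lemma isCyclic_zpowers' {G : Type*} [Group G] (g : G) : IsCyclic (Subgroup.zpowers g) :=
  ⟨⟨⟨g, Subgroup.mem_zpowers g⟩, fun x => by
    obtain ⟨k, hk⟩ := x.2
    exact ⟨k, Subtype.ext (by simpa using hk)⟩⟩⟩

lemma not_mem_zpowers_of_pow {G : Type*} [Group G] {x y : G} (n : ℕ)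
    (hy : y ^ n = 1) (hx : x ^ n ≠ 1) : x ∉ Subgroup.zpowers y := by
  rintro ⟨k, rfl⟩
  apply hx
  rw [← zpow_natCast, ← zpow_mul, mul_comm, zpow_mul, zpow_natCast, hy, one_zpow]

lemma adj_of_pows {G : Type*} [Group G] {x y : G} (hne : x ≠ y) (p q m n : ℕ)
    (hp : (x * y) ^ p = x) (hq : (x * y) ^ q = y)
    (hym : y ^ m = 1) (hxm : x ^ m ≠ 1) (hxn : x ^ n = 1) (hyn : y ^ n ≠ 1) :
    (deltaGraph G).Adj x y := by
  refine ⟨hne, ?_, not_mem_zpowers_of_pow m hym hxm, not_mem_zpowers_of_pow n hxn hyn⟩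
  have h : Subgroup.closure ({x, y} : Set G) = Subgroup.zpowers (x * y) := by
    apply le_antisymm
    · rw [Subgroup.closure_le]
      rintro z (rfl | rfl)
      · exact ⟨(p : ℤ), by simp only [zpow_natCast]; exact hp⟩
      · exact ⟨(q : ℤ), by simp only [zpow_natCast]; exact hq⟩
    · rw [Subgroup.zpowers_le]
      exact Subgroup.mul_mem _ (Subgroup.subset_closure (by simp))
        (Subgroup.subset_closure (by simp))
  rw [h]
  exact isCyclic_zpowers' _

lemma not_adj_of_noncomm {G : Type*} [Group G] {x y : G} (h : x * y ≠ y * x) :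
    ¬ (deltaGraph G).Adj x y := by
  rintro ⟨_, hc, _⟩
  apply h
  have hx : x ∈ Subgroup.closure ({x, y} : Set G) := Subgroup.subset_closure (by simp)
  have hy : y ∈ Subgroup.closure ({x, y} : Set G) := Subgroup.subset_closure (by simp)
  letI := hc.commGroup
  have : (⟨x, hx⟩ : Subgroup.closure ({x, y} : Set G)) * ⟨y, hy⟩ = ⟨y, hy⟩ * ⟨x, hx⟩ :=
    mul_comm _ _
  simpa using congrArg Subtype.val this

lemma not_adj_klein {G : Type*} [Group G] [Fintype G] [DecidableEq G] {x y : G}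
    (hx : x ^ 2 = 1) (hy : y ^ 2 = 1) (hne : x ≠ y) (hx1 : x ≠ 1) (hy1 : y ≠ 1) :
    ¬ (deltaGraph G).Adj x y := by
  rintro ⟨_, hc, _⟩
  have hxm : x ∈ Subgroup.closure ({x, y} : Set G) := Subgroup.subset_closure (by simp)
  have hym : y ∈ Subgroup.closure ({x, y} : Set G) := Subgroup.subset_closure (by simp)
  haveI : Fintype (Subgroup.closure ({x, y} : Set G)) := Fintype.ofFinite _
  have hle := hc.card_pow_eq_one_le (n := 2) (by norm_num)
  have hsub : ({⟨x, hxm⟩, ⟨y, hym⟩, 1} : Finset (Subgroup.closure ({x, y} : Set G))) ⊆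
      Finset.univ.filter (fun a => a ^ 2 = 1) := by
    intro z hz
    simp only [Finset.mem_insert, Finset.mem_singleton] at hz
    rcases hz with rfl | rfl | rfl <;>
      simp [Finset.mem_filter, Subtype.ext_iff, hx, hy]
  have hcard : ({⟨x, hxm⟩, ⟨y, hym⟩, 1} : Finset (Subgroup.closure ({x, y} : Set G))).card = 3 := by
    rw [Finset.card_insert_of_notMem, Finset.card_insert_of_notMem, Finset.card_singleton]
    · simp [Subtype.ext_iff, hy1]
    · simp [Subtype.ext_iff, hne, hx1]
  have := (Finset.card_le_card hsub).trans hle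
  omega

/-- The five permutations (1 2), (3 4 5), (6 7), (1 2 3), (4 5 6 7 8) of S₈
(written with `0`-based points) induce a 5-cycle in Δ(S₈). -/
theorem stmt_15 :
    let a : Equiv.Perm (Fin 8) := c[0, 1]
    let b : Equiv.Perm (Fin 8) := c[2, 3, 4]
    let c : Equiv.Perm (Fin 8) := c[5, 6]
    let d : Equiv.Perm (Fin 8) := c[0, 1, 2]
    let e : Equiv.Perm (Fin 8) := c[3, 4, 5, 6, 7]
    let Δ := deltaGraph (Equiv.Perm (Fin 8))
    (Δ.Adj a b ∧ Δ.Adj b c ∧ Δ.Adj c d ∧ Δ.Adj d e ∧ Δ.Adj e a) ∧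
    (¬Δ.Adj a c ∧ ¬Δ.Adj a d ∧ ¬Δ.Adj b d ∧ ¬Δ.Adj b e ∧ ¬Δ.Adj c e) := by
  intro a b c d e Δ
  refine ⟨⟨?_, ?_, ?_, ?_, ?_⟩, ?_, ?_, ?_, ?_, ?_⟩
  · exact adj_of_pows (by decide) 3 4 3 2 (by decide) (by decide) (by decide) (by decide)
      (by decide) (by decide)
  · exact adj_of_pows (by decide) 4 3 2 3 (by decide) (by decide) (by decide) (by decide)
      (by decide) (by decide)
  · exact adj_of_pows (by decide) 3 4 3 2 (by decide) (by decide) (by decide) (by decide)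
      (by decide) (by decide)
  · exact adj_of_pows (by decide) 10 6 5 3 (by decide) (by decide) (by decide) (by decide)
      (by decide) (by decide)
  · exact adj_of_pows (by decide) 6 5 2 5 (by decide) (by decide) (by decide) (by decide)
      (by decide) (by decide)
  · exact not_adj_klein (by decide) (by decide) (by decide) (by decide) (by decide)
  · exact not_adj_of_noncomm (by decide)
  · exact not_adj_of_noncomm (by decide)
  · exact not_adj_of_noncomm (by decide)
  · exact not_adj_of_noncomm (by decide)
end
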